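/- Let g : [0,1] → ℝ be concave with g(0)=0 and η(x) = -x log x. Let k ≥ 2 be an integer. Then limsup_{n→∞} (1/n) kⁿ g(k^{-n}) = C·log k if C := limsup_{x→0⁺} g(x)/η(x) is finite, and equals +∞ if C = ∞. -/

import Mathlib

/-- The Shannon entropy function. -/
noncomputable def eta (x : ℝ) : ℝ := -x * Real.log x

open Filter

lemma my_strictMono_mul (c : ℝ) (hc : 0 < c) : StrictMono (fun x : EReal => (c : EReal) * x) := by
  intro x y hxy
  induction x using EReal.rec <;> induction y using EReal.rec <;>
    simp_all [EReal.coe_mul_bot_of_pos hc, EReal.coe_mul_top_of_pos hc, ← EReal.coe_mul] <;>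
  first
  | exact EReal.bot_lt_coe _
  | exact EReal.coe_lt_top _
  | exact mul_lt_mul_of_pos_left hxy hc

lemma my_rightInv (c : ℝ) (hc : 0 < c) (x : EReal) :
    (c : EReal) * ((c⁻¹ : ℝ) * x) = x := by
  have hc' : (0:ℝ) < c⁻¹ := by positivity
  induction x using EReal.rec <;>
    simp [EReal.coe_mul_bot_of_pos hc, EReal.coe_mul_top_of_pos hc,
      EReal.coe_mul_bot_of_pos hc', EReal.coe_mul_top_of_pos hc', ← EReal.coe_mul, ← mul_assoc,
      mul_inv_cancel₀ hc.ne']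

noncomputable def myMulIso (c : ℝ) (hc : 0 < c) : EReal ≃o EReal :=
  StrictMono.orderIsoOfRightInverse _ (my_strictMono_mul c hc) (fun x => (c⁻¹ : ℝ) * x)
    (my_rightInv c hc)

lemma my_limsup_const_mul {α : Type*} (f : Filter α) (u : α → EReal) (c : ℝ) (hc : 0 < c) :
    limsup (fun x => (c : EReal) * u x) f = (c : EReal) * limsup u f :=
  ((myMulIso c hc).limsup_apply).symm

-- slope lemma: for 0 < x ≤ y ≤ 1, y * g x ≥ x * g y, i.e. g x / x ≥ g y / y
lemma slope_mono (g : ℝ → ℝ) (hconc : ConcaveOn ℝ (Set.Icc 0 1) g) (h0 : g 0 = 0)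
    {x y : ℝ} (hx : 0 < x) (hxy : x ≤ y) (hy : y ≤ 1) : g y / y ≤ g x / x := by
  have hy0 : 0 < y := hx.trans_le hxy
  have hb : x / y ∈ Set.Icc (0:ℝ) 1 := ⟨by positivity, by rw [div_le_one hy0]; exact hxy⟩
  have h := hconc.2 (Set.mem_Icc.2 ⟨le_refl 0, zero_le_one⟩)
    (Set.mem_Icc.2 ⟨hy0.le, hy⟩) (by linarith [hb.2] : (0:ℝ) ≤ 1 - x/y) hb.1 (by ring)
  simp only [smul_eq_mul, mul_zero, zero_add, h0, mul_zero] at h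
  have hxy' : (x / y) * y = x := div_mul_cancel₀ x hy0.ne'
  rw [hxy'] at h
  -- h : (1 - x/y) * 0 + x/y * g y ≤ g x
  rw [div_le_div_iff₀ hy0 hx]
  have : x / y * g y * y = x * g y := by field_simp
  nlinarith [h]

lemma pt_bound (g : ℝ → ℝ) (hconc : ConcaveOn ℝ (Set.Icc 0 1) g) (h0 : g 0 = 0)
    {K : ℝ} (hK : 1 < K) {n : ℕ} (hn : 1 ≤ n) {x : ℝ} (hx : x ∈ Set.Ioo (0:ℝ) 1)
    (h1 : (K^(n+1))⁻¹ ≤ x) (h2 : x ≤ (K^n)⁻¹) :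
    g x / eta x ≤ g ((K^(n+1))⁻¹) / eta ((K^(n+1))⁻¹)
      + (max (g ((K^(n+1))⁻¹) / eta ((K^(n+1))⁻¹)) 0) / n := by
  have hK0 : (0:ℝ) < K := by linarith
  have hlogK : 0 < Real.log K := Real.log_pos hK
  set y : ℝ := (K^(n+1))⁻¹ with hy_def
  have hy0 : 0 < y := by positivity
  have hx0 : 0 < x := hx.1
  have hx1 : x < 1 := hx.2
  have hlogy : Real.log y = -(((n:ℝ)+1) * Real.log K) := by
    rw [hy_def, Real.log_inv, Real.log_pow]; push_cast; ring
  have hetay : eta y = y * (((n:ℝ)+1) * Real.log K) := by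
    rw [eta, hlogy]; ring
  set a : ℝ := g y / eta y with ha_def
  set c : ℝ := g y / y with hc_def
  have hca : c = a * (((n:ℝ)+1) * Real.log K) := by
    rw [ha_def, hc_def, hetay]
    field_simp
  have hslope : g x / x ≤ c := slope_mono g hconc h0 hy0 h1 hx1.le
  set t : ℝ := -Real.log x with ht_def
  have ht0 : 0 < t := by
    rw [ht_def]
    simp only [neg_pos]
    exact Real.log_neg hx0 hx1
  have hetax : eta x = x * t := by rw [eta, ht_def]; ring
  have ht1 : (n : ℝ) * Real.log K ≤ t := by
    have h := Real.log_le_log hx0 h2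
    rw [Real.log_inv, Real.log_pow] at h
    rw [ht_def]; push_cast at h ⊢; linarith
  have ht2 : t ≤ ((n:ℝ)+1) * Real.log K := by
    have h := Real.log_le_log hy0 h1
    rw [hy_def, Real.log_inv, Real.log_pow] at h
    rw [ht_def]; push_cast at h ⊢; linarith
  have hn0 : (0:ℝ) < n := by exact_mod_cast hn
  have hmain : g x / eta x ≤ c / t := by
    rw [hetax, ← div_div]
    gcongr
  rcases le_or_gt 0 c with hc | hc
  · have ha : 0 ≤ a := by
      nlinarith [hca]
    have hstep : c / t ≤ c / ((n:ℝ) * Real.log K) :=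
      div_le_div_of_nonneg_left hc (by positivity) ht1
    have heq : c / ((n:ℝ) * Real.log K) = a + a / n := by
      rw [hca]; field_simp
    rw [max_eq_left ha]
    calc g x / eta x ≤ c / t := hmain
      _ ≤ c / ((n:ℝ) * Real.log K) := hstep
      _ = a + a / n := heq
  · have ha : a < 0 := by nlinarith [hca]
    have hstep : c / t ≤ c / (((n:ℝ)+1) * Real.log K) := by
      rw [div_le_div_iff₀ ht0 (by positivity)]
      nlinarith
    have heq : c / (((n:ℝ)+1) * Real.log K) = a := by
      rw [hca]; field_simp
    rw [max_eq_right ha.le, zero_div, add_zero]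
    exact hmain.trans (hstep.trans_eq heq)

open Filter in
lemma seq_le_filt (g : ℝ → ℝ) {K : ℝ} (hK : 1 < K) :
    limsup (fun n : ℕ => ((g ((K^n)⁻¹) / eta ((K^n)⁻¹) : ℝ) : EReal)) atTop ≤
      limsup (fun x : ℝ => ((g x / eta x : ℝ) : EReal)) (nhdsWithin 0 (Set.Ioo 0 1)) := by
  have hK0 : (0:ℝ) < K := by linarith
  set F : ℝ → EReal := fun x => ((g x / eta x : ℝ) : EReal) with hF
  have hφ : Tendsto (fun n : ℕ => (K^n)⁻¹) atTop (nhdsWithin 0 (Set.Ioo 0 1)) := by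
    rw [tendsto_nhdsWithin_iff]
    constructor
    · exact (tendsto_pow_atTop_atTop_of_one_lt hK).inv_tendsto_atTop
    · filter_upwards [eventually_ge_atTop 1] with n hn
      refine ⟨by positivity, ?_⟩
      rw [inv_lt_one_iff₀]
      right
      exact one_lt_pow₀ hK (by omega)
  have : (fun n : ℕ => F ((K^n)⁻¹)) = F ∘ (fun n : ℕ => (K^n)⁻¹) := rfl
  rw [show (fun n : ℕ => ((g ((K^n)⁻¹) / eta ((K^n)⁻¹) : ℝ) : EReal)) = F ∘ (fun n : ℕ => (K^n)⁻¹) from rfl,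
    Filter.limsup_comp]
  exact Filter.limsup_le_limsup_of_le hφ

open Filter in
lemma filt_le_seq (g : ℝ → ℝ) (hconc : ConcaveOn ℝ (Set.Icc 0 1) g) (h0 : g 0 = 0)
    {K : ℝ} (hK : 1 < K) :
    limsup (fun x : ℝ => ((g x / eta x : ℝ) : EReal)) (nhdsWithin 0 (Set.Ioo 0 1)) ≤
      limsup (fun n : ℕ => ((g ((K^n)⁻¹) / eta ((K^n)⁻¹) : ℝ) : EReal)) atTop := by
  have hK0 : (0:ℝ) < K := by linarith
  set S := limsup (fun n : ℕ => ((g ((K^n)⁻¹) / eta ((K^n)⁻¹) : ℝ) : EReal)) atTop with hS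
  -- reduce to: for every real M > S, limsup ≤ M
  suffices H : ∀ M : ℝ, S < (M : EReal) →
      ∀ᶠ x in nhdsWithin 0 (Set.Ioo 0 1), ((g x / eta x : ℝ) : EReal) < (M : EReal) by
    by_contra hcon
    push_neg at hcon
    obtain ⟨r, hSr, hrL⟩ := EReal.lt_iff_exists_real_btwn.1 hcon
    exact absurd (Filter.limsup_le_of_le (by isBoundedDefault)
      ((H r hSr).mono fun x hx => hx.le)) (not_le.2 hrL)
  intro M hSM
  obtain ⟨r, hSr, hrM⟩ := EReal.lt_iff_exists_real_btwn.1 hSM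
  rw [EReal.coe_lt_coe_iff] at hrM
  -- eventually a_n < r
  have hev : ∀ᶠ n : ℕ in atTop, g ((K^n)⁻¹) / eta ((K^n)⁻¹) < r := by
    have := Filter.eventually_lt_of_limsup_lt hSr
    filter_upwards [this] with n hn
    exact_mod_cast hn
  obtain ⟨N₁, hN₁⟩ := eventually_atTop.1 hev
  -- choose N
  obtain ⟨N₂, hN₂⟩ := exists_nat_gt (max r 0 / (M - r))
  set N : ℕ := max (max N₁ 1) N₂ + 1 with hN_def
  have hN1 : 1 ≤ N := by omega
  have hNN₁ : N₁ ≤ N := by omega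
  have hN0 : (0:ℝ) < N := by exact_mod_cast hN1
  have hNr : max r 0 / N < M - r := by
    rw [div_lt_iff₀ hN0]
    have h1 : max r 0 / (M - r) < N := by
      have : (N₂:ℝ) ≤ N := by exact_mod_cast (by omega : N₂ ≤ N)
      linarith
    rw [div_lt_iff₀ (by linarith : (0:ℝ) < M - r)] at h1
    linarith [h1]
  -- eventual smallness of x
  have hsmall : ∀ᶠ x : ℝ in nhdsWithin 0 (Set.Ioo 0 1), x < (K^N)⁻¹ := by
    apply eventually_nhdsWithin_of_eventually_nhds
    exact eventually_lt_nhds (by positivity)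
  filter_upwards [hsmall, self_mem_nhdsWithin] with x hxs hx
  rw [EReal.coe_lt_coe_iff]
  have hx0 : (0:ℝ) < x := hx.1
  have hx1 : x < 1 := hx.2
  -- find n
  set n : ℕ := Nat.floor (Real.logb K x⁻¹) with hn_def
  have hxinv1 : 1 < x⁻¹ := by rw [lt_inv_comm₀ one_pos hx0]; simpa using hx1
  have hlogb_pos : 0 ≤ Real.logb K x⁻¹ := (Real.logb_nonneg hK hxinv1.le)
  have hKn : K^N < x⁻¹ := by
    rw [lt_inv_comm₀ (by positivity) hx0]
    exact hxs
  have hnN : N ≤ n := by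
    rw [hn_def]
    apply Nat.le_floor
    rw [Real.le_logb_iff_rpow_le hK (by positivity), Real.rpow_natCast]
    exact hKn.le
  have hn1 : 1 ≤ n := le_trans hN1 hnN
  have h_up : x ≤ (K^n)⁻¹ := by
    have h1 : (n:ℝ) ≤ Real.logb K x⁻¹ := Nat.floor_le hlogb_pos
    rw [Real.le_logb_iff_rpow_le hK (by positivity), Real.rpow_natCast] at h1
    rw [le_inv_comm₀ hx0 (by positivity)]
    exact h1
  have h_low : (K^(n+1))⁻¹ ≤ x := by
    have h1 : Real.logb K x⁻¹ < (n:ℝ) + 1 := Nat.lt_floor_add_one _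
    rw [Real.logb_lt_iff_lt_rpow hK (by positivity)] at h1
    have h2 : x⁻¹ < K^(n+1) := by
      rwa [show ((n:ℝ)+1) = ((n+1 : ℕ):ℝ) by push_cast; ring, Real.rpow_natCast] at h1
    rw [inv_le_comm₀ (by positivity) hx0]
    exact h2.le
  have hbound := pt_bound g hconc h0 hK hn1 hx h_low h_up
  set a : ℝ := g ((K^(n+1))⁻¹) / eta ((K^(n+1))⁻¹) with ha_def
  have har : a < r := hN₁ (n+1) (by omega)
  have hnn0 : (0:ℝ) < n := by exact_mod_cast hn1
  have hmax : max a 0 / n ≤ max r 0 / N := by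
    calc max a 0 / n ≤ max r 0 / n := by
          rw [div_le_div_iff_of_pos_right hnn0]
          exact max_le_max har.le le_rfl
      _ ≤ max r 0 / N := by
          apply div_le_div_of_nonneg_left (le_max_right r 0) hN0
          exact_mod_cast hnN
  linarith [hbound, hmax, hNr]

theorem limsup_bernoulli_g_entropy (g : ℝ → ℝ)
    (hconc : ConcaveOn ℝ (Set.Icc 0 1) g) (h0 : g 0 = 0)
    (hlim : Filter.Tendsto g (nhdsWithin 0 (Set.Ioi 0)) (nhds 0))
    (k : ℕ) (hk : 2 ≤ k) :
    (∀ C : ℝ,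
      Filter.limsup (fun x : ℝ => ((g x / eta x : ℝ) : EReal))
          (nhdsWithin 0 (Set.Ioo 0 1)) = (C : EReal) →
      Filter.limsup
          (fun n : ℕ => (((1/(n:ℝ)) * ((k:ℝ)^n * g (((k:ℝ)^n)⁻¹)) : ℝ) : EReal))
          Filter.atTop = ((C * Real.log k : ℝ) : EReal)) ∧
    (Filter.limsup (fun x : ℝ => ((g x / eta x : ℝ) : EReal))
          (nhdsWithin 0 (Set.Ioo 0 1)) = ⊤ →
      Filter.limsup
          (fun n : ℕ => (((1/(n:ℝ)) * ((k:ℝ)^n * g (((k:ℝ)^n)⁻¹)) : ℝ) : EReal))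
          Filter.atTop = ⊤) := by
  have hK : (1:ℝ) < (k:ℝ) := by exact_mod_cast (by omega : 1 < k)
  have hK0 : (0:ℝ) < (k:ℝ) := by linarith
  have hlogK : 0 < Real.log (k:ℝ) := Real.log_pos hK
  have heq : Filter.limsup (fun x : ℝ => ((g x / eta x : ℝ) : EReal))
      (nhdsWithin 0 (Set.Ioo 0 1)) =
      Filter.limsup (fun n : ℕ => ((g (((k:ℝ)^n)⁻¹) / eta (((k:ℝ)^n)⁻¹) : ℝ) : EReal))
        Filter.atTop :=
    le_antisymm (filt_le_seq g hconc h0 hK) (seq_le_filt g hK)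
  have hseq : ∀ᶠ n : ℕ in Filter.atTop,
      (((1/(n:ℝ)) * ((k:ℝ)^n * g (((k:ℝ)^n)⁻¹)) : ℝ) : EReal) =
      (Real.log (k:ℝ) : EReal) * ((g (((k:ℝ)^n)⁻¹) / eta (((k:ℝ)^n)⁻¹) : ℝ) : EReal) := by
    filter_upwards [Filter.eventually_ge_atTop 1] with n hn
    rw [← EReal.coe_mul, EReal.coe_eq_coe_iff]
    have hn0 : (0:ℝ) < n := by exact_mod_cast hn
    have hpow : (0:ℝ) < (k:ℝ)^n := by positivity
    have hetan : eta (((k:ℝ)^n)⁻¹) = ((k:ℝ)^n)⁻¹ * ((n:ℝ) * Real.log (k:ℝ)) := by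
      rw [eta, Real.log_inv, Real.log_pow]; ring
    rw [hetan]
    field_simp
  have hmul : Filter.limsup
      (fun n : ℕ => (((1/(n:ℝ)) * ((k:ℝ)^n * g (((k:ℝ)^n)⁻¹)) : ℝ) : EReal)) Filter.atTop =
      (Real.log (k:ℝ) : EReal) *
        Filter.limsup (fun n : ℕ => ((g (((k:ℝ)^n)⁻¹) / eta (((k:ℝ)^n)⁻¹) : ℝ) : EReal))
          Filter.atTop := by
    rw [Filter.limsup_congr hseq]
    exact my_limsup_const_mul _ _ _ hlogK
  constructor
  · intro C hC
    rw [heq] at hC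
    rw [hmul, hC, ← EReal.coe_mul, mul_comm]
  · intro hC
    rw [heq] at hC
    rw [hmul, hC]
    exact EReal.coe_mul_top_of_pos hlogK
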